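/- Suppose R satisfies the curvature-type symmetries and the q-invariance R(qx,qy,qz,qu) = R(x,y,z,u). If u ∈ ℝ³ induces a q-basis, then the sectional curvatures of the three 2-planes spanned by {u, qu}, {qu, q²u} and {q²u, u} are equal: μ(u, qu) = μ(qu, q²u) = μ(u, q²u). -/

import Mathlib

/-- The metric `g` determined by the circulant matrix with rows `(A,B,B),(B,A,B),(B,B,A)`. -/
def g (A B : ℝ) (x y : Fin 3 → ℝ) : ℝ :=
  A * (x 0 * y 0 + x 1 * y 1 + x 2 * y 2) +
    B * (x 0 * y 1 + x 0 * y 2 + x 1 * y 0 + x 1 * y 2 + x 2 * y 0 + x 2 * y 1)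

/-- The structure `q`, given by `q(x¹,x²,x³) = (-x²,-x³,-x¹)`, with `q³ = -id`. -/
def q (x : Fin 3 → ℝ) : Fin 3 → ℝ := ![-(x 1), -(x 2), -(x 0)]

/-- The sectional curvature of the 2-plane spanned by `x, y`. -/
noncomputable def sec (A B : ℝ) (R : MultilinearMap ℝ (fun _ : Fin 4 => Fin 3 → ℝ) ℝ)
    (x y : Fin 3 → ℝ) : ℝ :=
  R ![x, y, x, y] / (g A B x x * g A B y y - (g A B x y) ^ 2)

/-- if `u` induces a `q`-basis then the sectional curvatures of the 2-planes
`{u,qu}`, `{qu,q²u}` and `{q²u,u}` are equal. -/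
theorem sectional_curvatures_equal (A B : ℝ) (hAB : A > B) (hB : B > 0)
    (R : MultilinearMap ℝ (fun _ : Fin 4 => Fin 3 → ℝ) ℝ)
    (hsym1 : ∀ x y z u : Fin 3 → ℝ, R ![x, y, z, u] = -R ![y, x, z, u])
    (hsym2 : ∀ x y z u : Fin 3 → ℝ, R ![x, y, z, u] = -R ![x, y, u, z])
    (hsym3 : ∀ x y z u : Fin 3 → ℝ, R ![x, y, z, u] = R ![z, u, x, y])
    (hq : ∀ x y z u : Fin 3 → ℝ, R ![q x, q y, q z, q u] = R ![x, y, z, u])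
    (u : Fin 3 → ℝ) (hu : LinearIndependent ℝ ![u, q u, q (q u)]) :
    sec A B R u (q u) = sec A B R (q u) (q (q u)) ∧
      sec A B R (q u) (q (q u)) = sec A B R u (q (q u)) := by
  -- negation in slot 0
  have hneg0 : ∀ x y z w : Fin 3 → ℝ, R ![-x, y, z, w] = -R ![x, y, z, w] := by
    intro x y z w
    have h := R.map_update_smul ![x, y, z, w] 0 (-1 : ℝ) x
    have e1 : Function.update ![x, y, z, w] 0 ((-1 : ℝ) • x) = ![-x, y, z, w] := by
      funext i; fin_cases i <;> simp [Function.update]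
    have e2 : Function.update ![x, y, z, w] 0 x = ![x, y, z, w] := by
      funext i; fin_cases i <;> simp [Function.update]
    rw [e1, e2] at h
    simpa using h
  have hneg1 : ∀ x y z w : Fin 3 → ℝ, R ![x, -y, z, w] = -R ![x, y, z, w] := by
    intro x y z w
    have h := R.map_update_smul ![x, y, z, w] 1 (-1 : ℝ) y
    have e1 : Function.update ![x, y, z, w] 1 ((-1 : ℝ) • y) = ![x, -y, z, w] := by
      funext i; fin_cases i <;> simp [Function.update]
    have e2 : Function.update ![x, y, z, w] 1 y = ![x, y, z, w] := by
      funext i; fin_cases i <;> simp [Function.update]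
    rw [e1, e2] at h
    simpa using h
  have hneg3 : ∀ x y z w : Fin 3 → ℝ, R ![x, y, z, -w] = -R ![x, y, z, w] := by
    intro x y z w
    have h := R.map_update_smul ![x, y, z, w] 3 (-1 : ℝ) w
    have e1 : Function.update ![x, y, z, w] 3 ((-1 : ℝ) • w) = ![x, y, z, -w] := by
      funext i; fin_cases i <;> simp [Function.update]
    have e2 : Function.update ![x, y, z, w] 3 w = ![x, y, z, w] := by
      funext i; fin_cases i <;> simp [Function.update]
    rw [e1, e2] at h
    simpa using h
  have hq3 : q (q (q u)) = -u := by
    funext i; fin_cases i <;> simp [q]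
  -- denominators
  have hden1 : g A B u u * g A B (q u) (q u) - g A B u (q u) ^ 2 =
      g A B (q u) (q u) * g A B (q (q u)) (q (q u)) - g A B (q u) (q (q u)) ^ 2 := by
    simp only [g, q]
    simp only [Matrix.cons_val_zero, Matrix.cons_val_one, Matrix.head_cons,
      Matrix.cons_val_two, Matrix.tail_cons]
    ring
  have hden2 : g A B (q u) (q u) * g A B (q (q u)) (q (q u)) - g A B (q u) (q (q u)) ^ 2 =
      g A B u u * g A B (q (q u)) (q (q u)) - g A B u (q (q u)) ^ 2 := by
    simp only [g, q]
    simp only [Matrix.cons_val_zero, Matrix.cons_val_one, Matrix.head_cons,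
      Matrix.cons_val_two, Matrix.tail_cons]
    ring
  -- numerators
  have hnum1 : R ![u, q u, u, q u] = R ![q u, q (q u), q u, q (q u)] :=
    (hq u (q u) u (q u)).symm
  have hnum2 : R ![q u, q (q u), q u, q (q u)] = R ![u, q (q u), u, q (q u)] := by
    have h := hq (q u) (q (q u)) (q u) (q (q u))
    rw [hq3] at h
    rw [← h, hneg1, hneg3]
    rw [hsym1 (q (q u)) u, hsym2 u (q (q u)) (q (q u)) u]
    ring
  constructor
  · unfold sec
    rw [hnum1, hden1]
  · unfold sec
    rw [hnum2, hden2]
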